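/- Suppose that for each z ∈ ℝ^d the map y ↦ g(y,z) is nondecreasing and left-continuous, and for each y ∈ ℝ the map z ↦ g(y,z) is continuous. Then g satisfies condition (H1a) at every point: for every (y₀,z₀) ∈ ℝ × ℝ^d, (i) g(y,z) tends to g(y₀,z₀) as (y,z) → (y₀,z₀) with y ≤ y₀, and (ii) the liminf of g(y,z) as (y,z) → (y₀,z₀) with y ≥ y₀ is ≥ g(y₀,z₀). -/

import Mathlib

open Filter Topology

/-- If for each `z` the map `y ↦ g(y,z)` is nondecreasing and left-continuous,
and for each `y` the map `z ↦ g(y,z)` is continuous, then `g` satisfies (H1a) at every point: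
(i) `g(y,z) → g(y₀,z₀)` as `(y,z) → (y₀,z₀)` with `y ≤ y₀`, and
(ii) `liminf_{(y,z) → (y₀,z₀), y ≥ y₀} g(y,z) ≥ g(y₀,z₀)`. -/
theorem stmt_12 (d : ℕ) (hd : 1 ≤ d)
    (g : ℝ → EuclideanSpace ℝ (Fin d) → ℝ)
    (hmono : ∀ z : EuclideanSpace ℝ (Fin d), Monotone fun y => g y z)
    (hleft : ∀ (z : EuclideanSpace ℝ (Fin d)) (y₀ : ℝ),
      ContinuousWithinAt (fun y => g y z) (Set.Iic y₀) y₀)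
    (hcontz : ∀ y : ℝ, Continuous fun z : EuclideanSpace ℝ (Fin d) => g y z)
    (y₀ : ℝ) (z₀ : EuclideanSpace ℝ (Fin d)) :
    Tendsto (fun p : ℝ × EuclideanSpace ℝ (Fin d) => g p.1 p.2)
      (𝓝[{p : ℝ × EuclideanSpace ℝ (Fin d) | p.1 ≤ y₀}] (y₀, z₀)) (𝓝 (g y₀ z₀)) ∧
    g y₀ z₀ ≤ Filter.liminf (fun p : ℝ × EuclideanSpace ℝ (Fin d) => g p.1 p.2)
      (𝓝[{p : ℝ × EuclideanSpace ℝ (Fin d) | y₀ ≤ p.1}] (y₀, z₀)) := by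
  set s₁ : Set (ℝ × EuclideanSpace ℝ (Fin d)) := {p | p.1 ≤ y₀} with hs₁
  set s₂ : Set (ℝ × EuclideanSpace ℝ (Fin d)) := {p | y₀ ≤ p.1} with hs₂
  constructor
  · rw [Metric.tendsto_nhds]
    intro ε hε
    -- find y₁ < y₀ with g y₁ z₀ close to g y₀ z₀
    have hl : ∀ᶠ y in 𝓝[Set.Iic y₀] y₀, g y₀ z₀ - ε / 2 < g y z₀ :=
      (hleft z₀ y₀).eventually (eventually_gt_nhds (by linarith))
    obtain ⟨l, hl0, hlsub⟩ := mem_nhdsLE_iff_exists_Ioc_subset.1 hl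
    set y₁ : ℝ := (l + y₀) / 2 with hy₁def
    have hly₁ : l < y₁ := by
      simp only [hy₁def]
      nlinarith [hl0.out]
    have hy₁lt : y₁ < y₀ := by
      simp only [hy₁def]
      nlinarith [hl0.out]
    have hgy₁ : g y₀ z₀ - ε / 2 < g y₁ z₀ := hlsub ⟨hly₁, le_of_lt hy₁lt⟩
    have hU1 : ∀ᶠ z in 𝓝 z₀, g y₀ z₀ - ε < g y₁ z :=
      ((hcontz y₁).tendsto z₀).eventually (eventually_gt_nhds (by linarith))
    have hU2 : ∀ᶠ z in 𝓝 z₀, g y₀ z < g y₀ z₀ + ε :=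
      ((hcontz y₀).tendsto z₀).eventually (eventually_lt_nhds (by linarith))
    have hA : ∀ᶠ p : ℝ × EuclideanSpace ℝ (Fin d) in 𝓝[s₁] (y₀, z₀), y₁ < p.1 :=
      eventually_nhdsWithin_of_eventually_nhds
        ((continuous_fst.tendsto (y₀, z₀)).eventually (eventually_gt_nhds hy₁lt))
    have hB : ∀ᶠ p : ℝ × EuclideanSpace ℝ (Fin d) in 𝓝[s₁] (y₀, z₀),
        g y₀ z₀ - ε < g y₁ p.2 ∧ g y₀ p.2 < g y₀ z₀ + ε :=
      eventually_nhdsWithin_of_eventually_nhds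
        ((continuous_snd.tendsto (y₀, z₀)).eventually (hU1.and hU2))
    have hC : ∀ᶠ p : ℝ × EuclideanSpace ℝ (Fin d) in 𝓝[s₁] (y₀, z₀), p ∈ s₁ :=
      self_mem_nhdsWithin
    filter_upwards [hA, hB, hC] with p h1 h2 h3
    have hle : g p.1 p.2 ≤ g y₀ p.2 := hmono p.2 h3
    have hge : g y₁ p.2 ≤ g p.1 p.2 := hmono p.2 (le_of_lt h1)
    rw [Real.dist_eq, abs_lt]
    constructor <;> linarith [h2.1, h2.2]
  · haveI : (𝓝[s₂] ((y₀, z₀) : ℝ × EuclideanSpace ℝ (Fin d))).NeBot :=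
      nhdsWithin_neBot_of_mem (le_refl y₀)
    have hev : ∀ ε : ℝ, 0 < ε →
        ∀ᶠ p : ℝ × EuclideanSpace ℝ (Fin d) in 𝓝[s₂] (y₀, z₀),
          g y₀ z₀ - ε ≤ g p.1 p.2 := by
      intro ε hε
      have hU : ∀ᶠ z in 𝓝 z₀, g y₀ z₀ - ε < g y₀ z :=
        ((hcontz y₀).tendsto z₀).eventually (eventually_gt_nhds (by linarith))
      have hB : ∀ᶠ p : ℝ × EuclideanSpace ℝ (Fin d) in 𝓝[s₂] (y₀, z₀),
          g y₀ z₀ - ε < g y₀ p.2 :=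
        eventually_nhdsWithin_of_eventually_nhds
          ((continuous_snd.tendsto (y₀, z₀)).eventually hU)
      filter_upwards [hB, self_mem_nhdsWithin] with p h2 h3
      have : g y₀ p.2 ≤ g p.1 p.2 := hmono p.2 h3
      linarith
    have key : ∀ ε : ℝ, 0 < ε →
        g y₀ z₀ - ε ≤ Filter.liminf (fun p : ℝ × EuclideanSpace ℝ (Fin d) => g p.1 p.2)
          (𝓝[s₂] (y₀, z₀)) := by
      intro ε hε
      refine le_liminf_of_le ?_ (hev ε hε)
      have hub : ∀ᶠ p : ℝ × EuclideanSpace ℝ (Fin d) in 𝓝[s₂] (y₀, z₀),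
          g p.1 p.2 ≤ g (y₀ + 1) z₀ + 1 := by
        have hU : ∀ᶠ z in 𝓝 z₀, g (y₀ + 1) z < g (y₀ + 1) z₀ + 1 :=
          ((hcontz (y₀ + 1)).tendsto z₀).eventually (eventually_lt_nhds (by linarith))
        have hB : ∀ᶠ p : ℝ × EuclideanSpace ℝ (Fin d) in 𝓝[s₂] (y₀, z₀),
            g (y₀ + 1) p.2 < g (y₀ + 1) z₀ + 1 :=
          eventually_nhdsWithin_of_eventually_nhds
            ((continuous_snd.tendsto (y₀, z₀)).eventually hU)
        have hA : ∀ᶠ p : ℝ × EuclideanSpace ℝ (Fin d) in 𝓝[s₂] (y₀, z₀),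
            p.1 < y₀ + 1 :=
          eventually_nhdsWithin_of_eventually_nhds
            ((continuous_fst.tendsto (y₀, z₀)).eventually (eventually_lt_nhds (by linarith)))
        filter_upwards [hA, hB] with p h1 h2
        have : g p.1 p.2 ≤ g (y₀ + 1) p.2 := hmono p.2 (le_of_lt h1)
        linarith
      exact isCoboundedUnder_ge_of_eventually_le _ hub
    refine le_of_forall_pos_le_add fun ε hε => ?_
    linarith [key ε hε]
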